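/- Let s ≥ 2 and t ≥ 2 be integers and let M ⊆ V(P_s □ P_t). Suppose M satisfies all of the following conditions: (i) |M ∩ P_s^i| ≤ 2 and |M ∩ ^jP_t| ≤ 2 for every i ∈ {0,...,t-1} and j ∈ {0,...,s-1}; (ii) if M ∩ P_s^i = {u,v} and M ∩ P_s^j = {w,z} for some i,j ∈ {0,...,t-1}, then [u_x,v_x] ∩ [w_x,z_x] ≠ ∅; (iii) if M ∩ ^iP_t = {u,v} and M ∩ ^jP_t = {w,z} for some i,j ∈ {0,...,s-1}, then [u_y,v_y] ∩ [w_y,z_y] ≠ ∅; (iv) d(u,v) ≥ 3 for every pair of distinct vertices u,v ∈ M. Then M is a mutual-visibility set of P_s □ P_t. -/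

import Mathlib

open SimpleGraph

/-- `M` is a mutual-visibility set of `G`: any two vertices of `M` are joined by a
shortest path containing no other vertex of `M`. -/
def IsMutualVisibilitySet {V : Type*} (G : SimpleGraph V) (M : Set V) : Prop :=
  ∀ u ∈ M, ∀ v ∈ M, ∃ p : G.Walk u v, p.IsPath ∧ p.length = G.dist u v ∧
    ∀ w ∈ p.support, w ∈ M → w = u ∨ w = v

/-- The mutual-visibility number of `G`: the maximum cardinality of a
mutual-visibility set of `G`. -/
noncomputable def mutualVisibilityNumber {V : Type*} (G : SimpleGraph V) : ℕ :=
  sSup {n : ℕ | ∃ M : Set V, IsMutualVisibilitySet G M ∧ M.ncard = n}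

/-- The interval `I(u,v)`: the set of vertices lying on shortest `u,v`-paths of `G`. -/
def gInterval {V : Type*} (G : SimpleGraph V) (u v : V) : Set V :=
  {w | ∃ p : G.Walk u v, p.IsPath ∧ p.length = G.dist u v ∧ w ∈ p.support}

/-- The cyclic distance `|n-k|_t = min(|n-k|, t-|n-k|)` on `{0,…,t-1}`. -/
def cycDist (t : ℕ) (k n : Fin t) : ℕ :=
  min (Nat.dist k.val n.val) (t - Nat.dist k.val n.val)

/-- The cyclic interval `[k,n]_t` on `{0,…,t-1}`. -/
def cycInterval (t : ℕ) (k n : Fin t) : Set (Fin t) :=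
  if 2 * cycDist t k n < t then {m : Fin t | m.val ∈ Set.uIcc k.val n.val}
  else if 2 * cycDist t k n = t then Set.univ
  else {m : Fin t | m.val ∉ Set.uIcc k.val n.val} ∪ {k, n}

namespace MVGrid

theorem nat_dist_eq (a b : ℕ) : Nat.dist a b = a - b + (b - a) := rfl

theorem eq_pair_of_ncard_le {α : Type*} [Finite α] {S : Set α} {a b : α}
    (hS : S.ncard ≤ 2) (ha : a ∈ S) (hb : b ∈ S) (hab : a ≠ b) : S = {a, b} := by
  have hsub : ({a, b} : Set α) ⊆ S := by
    intro x hx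
    rcases hx with hx | hx
    · exact hx ▸ ha
    · exact hx ▸ hb
  have h2 : ({a, b} : Set α).ncard = 2 := Set.ncard_pair hab
  exact (Set.eq_of_subset_of_ncard_le hsub (by omega) (Set.toFinite S)).symm

theorem three_le_ncard {α : Type*} [Finite α] {S : Set α} {a b c : α}
    (ha : a ∈ S) (hb : b ∈ S) (hc : c ∈ S) (hab : a ≠ b) (hac : a ≠ c) (hbc : b ≠ c) :
    3 ≤ S.ncard := by
  have hsub : ({a, b, c} : Set α) ⊆ S := by
    intro x hx
    rcases hx with hx | hx | hx
    · exact hx ▸ ha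
    · exact hx ▸ hb
    · exact hx ▸ hc
  have h3 : ({a, b, c} : Set α).ncard = 3 := by
    rw [Set.ncard_insert_of_notMem (by simp [hab, hac]), Set.ncard_pair hbc]
  rw [← h3]
  exact Set.ncard_le_ncard hsub (Set.toFinite S)

def Obs (X Y : ℕ) (Pt : ℕ → ℕ → Prop) (x y : ℕ) : Prop :=
  Pt x y ∧ ¬(x = 0 ∧ y = 0) ∧ ¬(x = X ∧ y = Y)

inductive Rch (X Y : ℕ) (Pt : ℕ → ℕ → Prop) : ℕ → ℕ → Prop
  | base : Rch X Y Pt 0 0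
  | right {x y : ℕ} : Rch X Y Pt x y → x + 1 ≤ X → ¬ Obs X Y Pt (x+1) y → Rch X Y Pt (x+1) y
  | up {x y : ℕ} : Rch X Y Pt x y → y + 1 ≤ Y → ¬ Obs X Y Pt x (y+1) → Rch X Y Pt x (y+1)

inductive Rch' (X Y : ℕ) (Pt : ℕ → ℕ → Prop) : ℕ → ℕ → Prop
  | base : Rch' X Y Pt X Y
  | left {x y : ℕ} : Rch' X Y Pt (x+1) y → ¬ Obs X Y Pt x y → Rch' X Y Pt x y
  | down {x y : ℕ} : Rch' X Y Pt x (y+1) → ¬ Obs X Y Pt x y → Rch' X Y Pt x y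

variable {X Y : ℕ} {Pt : ℕ → ℕ → Prop}

theorem Rch.not_obs {x y : ℕ} (h : Rch X Y Pt x y) : ¬ Obs X Y Pt x y := by
  cases h with
  | base => exact fun h => h.2.1 ⟨rfl, rfl⟩
  | right _ _ h => exact h
  | up _ _ h => exact h

theorem Rch.bounds {x y : ℕ} (h : Rch X Y Pt x y) : x ≤ X ∧ y ≤ Y := by
  induction h with
  | base => exact ⟨Nat.zero_le _, Nat.zero_le _⟩
  | right _ h _ ih => exact ⟨h, ih.2⟩
  | up _ h _ ih => exact ⟨ih.1, h⟩

theorem Rch'.not_obs {x y : ℕ} (h : Rch' X Y Pt x y) : ¬ Obs X Y Pt x y := by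
  cases h with
  | base => exact fun h => h.2.2 ⟨rfl, rfl⟩
  | left _ h => exact h
  | down _ h => exact h

theorem Rch'.bounds {x y : ℕ} (h : Rch' X Y Pt x y) : x ≤ X ∧ y ≤ Y := by
  induction h with
  | base => exact ⟨le_refl _, le_refl _⟩
  | left _ _ ih => omega
  | down _ _ ih => omega

theorem stop_right {x y : ℕ} (h : Rch X Y Pt x y) (hx : x + 1 ≤ X)
    (hn : ¬ Rch X Y Pt (x+1) y) : Obs X Y Pt (x+1) y := by
  by_contra hobs; exact hn (h.right hx hobs)

theorem stop_up {x y : ℕ} (h : Rch X Y Pt x y) (hy : y + 1 ≤ Y)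
    (hn : ¬ Rch X Y Pt x (y+1)) : Obs X Y Pt x (y+1) := by
  by_contra hobs; exact hn (h.up hy hobs)

theorem cross {x y : ℕ} (h : Rch X Y Pt x y) : ∀ a ≤ x, ∃ y' ≤ y, Rch X Y Pt a y' := by
  induction h with
  | base => intro a ha; exact ⟨0, le_refl _, by simpa [Nat.le_zero.mp ha] using Rch.base⟩
  | @right x y h hx hobs ih =>
    intro a ha
    rcases Nat.lt_or_ge a (x+1) with h' | h'
    · exact ih a (by omega)
    · have : a = x+1 := le_antisymm ha h'
      subst this; exact ⟨y, le_refl _, h.right hx hobs⟩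
  | @up x y h hy hobs ih =>
    intro a ha
    rcases ih a ha with ⟨y', hy', hr⟩
    exact ⟨y', by omega, hr⟩

theorem machine (X Y : ℕ) (Pt : ℕ → ℕ → Prop) (hX : 1 ≤ X) (hY : 1 ≤ Y)
    (hu : Pt 0 0) (hv : Pt X Y)
    (H2 : ∀ x y x' y', Pt x y → Pt x' y' → ¬(x = x' ∧ y = y') →
      3 ≤ Nat.dist x x' + Nat.dist y y')
    (H3r : ∀ x1 x2 x3 y, Pt x1 y → Pt x2 y → Pt x3 y → x1 = x2 ∨ x1 = x3 ∨ x2 = x3)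
    (H3c : ∀ x y1 y2 y3, Pt x y1 → Pt x y2 → Pt x y3 → y1 = y2 ∨ y1 = y3 ∨ y2 = y3)
    (H4 : ∀ c w d, Pt 0 c → Pt w c → Pt d Y → w ≠ 0 → d ≠ X → c ≠ Y → d ≤ w)
    (H5 : ∀ a w b, Pt a 0 → Pt a w → Pt X b → w ≠ 0 → b ≠ Y → a ≠ X → b ≤ w) :
    Rch X Y Pt X Y := by
  classical
  by_contra hfail
  have dist2 : ∀ {x y x' y'}, Obs X Y Pt x y → Obs X Y Pt x' y' → ¬(x = x' ∧ y = y') →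
      3 ≤ Nat.dist x x' + Nat.dist y y' := fun h h' hne => H2 _ _ _ _ h.1 h'.1 hne
  have dd : ∀ a b : ℕ, Nat.dist a b = a - b + (b - a) := fun _ _ => rfl
  have no_diag : ∀ {x y}, Obs X Y Pt (x+1) y → Obs X Y Pt x (y+1) → False := by
    intro x y h h'
    have := dist2 h h' (by omega)
    rw [dd, dd] at this; omega
  have survive : ∀ {x y}, Rch X Y Pt x y → x + 1 ≤ X → y + 1 ≤ Y → ¬ Rch X Y Pt (x+1) y →
      Rch X Y Pt x (y+1) := by
    intro x y h hx hy hn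
    by_contra hn2
    exact no_diag (stop_right h hx hn) (stop_up h hy hn2)
  -- row maxima
  set g : ℕ → ℕ := fun y => Nat.findGreatest (fun x => Rch X Y Pt x y) X with hgdef
  have hg_le : ∀ y, g y ≤ X := fun y => Nat.findGreatest_le X
  have hg_rch : ∀ y x, x ≤ X → Rch X Y Pt x y → Rch X Y Pt (g y) y :=
    fun y x hx hr => Nat.findGreatest_spec (P := fun x => Rch X Y Pt x y) hx hr
  have hg_ge : ∀ y x, x ≤ X → Rch X Y Pt x y → x ≤ g y :=
    fun y x hx hr => Nat.le_findGreatest (P := fun x => Rch X Y Pt x y) hx hr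
  have hg_max : ∀ y m, g y < m → m ≤ X → ¬ Rch X Y Pt m y :=
    fun y m h1 h2 => Nat.findGreatest_is_greatest (P := fun x => Rch X Y Pt x y) h1 h2
  -- no-death
  have ND : ∀ y, y + 1 ≤ Y → (∃ x, x ≤ X ∧ Rch X Y Pt x y) →
      ∃ x, x ≤ X ∧ Rch X Y Pt x (y+1) := by
    rintro y hy ⟨x0, hx0, hr0⟩
    have hrg : Rch X Y Pt (g y) y := hg_rch y x0 hx0 hr0
    by_cases hob : Obs X Y Pt (g y) (y+1)
    · rcases Nat.lt_or_ge (g y) X with hlt | hge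
      · exact absurd (stop_right hrg (by omega) (hg_max y (g y + 1) (by omega) (by omega)))
          (fun h => no_diag h hob)
      · have hgX : g y = X := le_antisymm (hg_le y) hge
        by_cases h2nd : ∃ x, x ≤ X - 1 ∧ Rch X Y Pt x y
        · obtain ⟨x1, hx1, hr1⟩ := h2nd
          set g2 := Nat.findGreatest (fun x => Rch X Y Pt x y) (X-1) with hg2def
          have hrg2 : Rch X Y Pt g2 y :=
            Nat.findGreatest_spec (P := fun x => Rch X Y Pt x y) hx1 hr1
          have hg2le : g2 ≤ X - 1 := Nat.findGreatest_le _
          have hg2_max : ∀ m, g2 < m → m ≤ X - 1 → ¬ Rch X Y Pt m y := fun m h1 h2 => by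
            rw [hg2def] at h1
            exact Nat.findGreatest_is_greatest (P := fun x => Rch X Y Pt x y) h1 h2
          by_cases hob2 : Obs X Y Pt g2 (y+1)
          · rcases Nat.lt_or_ge g2 (X-1) with hlt2 | hge2
            · have hn2 : ¬ Rch X Y Pt (g2+1) y := hg2_max (g2+1) (by omega) (by omega)
              exact absurd (stop_right hrg2 (by omega) hn2) (fun h => no_diag h hob2)
            · exfalso
              have hg2X : g2 = X - 1 := le_antisymm hg2le hge2
              have hB : Obs X Y Pt X (y+1) := by rwa [hgX] at hob
              have := dist2 hob2 hB (by omega)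
              rw [dd, dd] at this; omega
          · exact ⟨g2, by omega, hrg2.up hy hob2⟩
        · push_neg at h2nd
          have h0y : ¬ Rch X Y Pt 0 y := h2nd 0 (by omega)
          have hex : ∃ r, ¬ Rch X Y Pt 0 r := ⟨y, h0y⟩
          have hrne : Nat.find hex ≠ 0 := fun h => (Nat.find_spec hex) (by rw [h]; exact Rch.base)
          obtain ⟨r', hr'⟩ := Nat.exists_eq_succ_of_ne_zero hrne
          have hprev : Rch X Y Pt 0 r' := by
            by_contra hc
            exact (Nat.find_min hex (by omega)) hc
          have hrley : r' + 1 ≤ y := by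
            have : Nat.find hex ≤ y := Nat.find_min' hex h0y
            omega
          have hOr : Obs X Y Pt 0 (r'+1) := by
            apply stop_up hprev (by omega)
            intro hc
            exact (Nat.find_spec hex) (hr' ▸ hc)
          have hB : Obs X Y Pt X (y+1) := by rwa [hgX] at hob
          have hyY : y + 1 ≠ Y := fun h => hB.2.2 ⟨rfl, h⟩
          have := H5 0 (r'+1) (y+1) hu hOr.1 hB.1 (by omega) hyY (by omega)
          omega
    · exact ⟨g y, hg_le y, hrg.up hy hob⟩
  have NE : ∀ y, y ≤ Y → ∃ x, x ≤ X ∧ Rch X Y Pt x y := by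
    intro y
    induction y with
    | zero => exact fun _ => ⟨0, Nat.zero_le _, Rch.base⟩
    | succ n ih => exact fun h => ND n h (ih (by omega))
  have hgr : ∀ y, y ≤ Y → Rch X Y Pt (g y) y := by
    intro y hy; obtain ⟨x, hx, hr⟩ := NE y hy; exact hg_rch y x hx hr
  by_cases hP : ∃ yp, yp ≤ Y ∧ Rch X Y Pt X yp
  case neg =>
    -- never pinned to column X
    push_neg at hP
    have hglt : ∀ y, y ≤ Y → g y < X :=
      fun y hy => lt_of_le_of_ne (hg_le y) (fun h => hP y hy (h ▸ hgr y hy))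
    have hstop : ∀ y, y ≤ Y → Obs X Y Pt (g y + 1) y := fun y hy =>
      stop_right (hgr y hy) (by have := hglt y hy; omega)
        (hg_max y (g y + 1) (by omega) (by have := hglt y hy; omega))
    have hmono : ∀ y, y + 1 ≤ Y → g y ≤ g (y+1) := by
      intro y hy
      have hs : Rch X Y Pt (g y) (y+1) :=
        survive (hgr y (by omega)) (by have := hglt y (by omega); omega) hy
          (hg_max y (g y + 1) (by omega) (by have := hglt y (by omega); omega))
      exact hg_ge (y+1) (g y) (hg_le y) hs
    have hchain : ∀ k y, y + k ≤ Y → g y ≤ g (y + k) := by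
      intro k
      induction k with
      | zero => intro y _; simp
      | succ n ih =>
        intro y h
        calc g y ≤ g (y + n) := ih y (by omega)
        _ ≤ g (y + n + 1) := hmono (y+n) (by omega)
        _ = g (y + (n+1)) := by ring_nf
    have hgrow : g 0 + 2 ≤ g 1 := by
      have h0 := hstop 0 (by omega)
      have h1 := hstop 1 hY
      have hm : g 0 ≤ g 1 := by simpa using hmono 0 hY
      have := dist2 h0 h1 (by omega)
      rw [dd, dd] at this; omega
    have hg1Y : g 1 ≤ g Y := by
      have := hchain (Y - 1) 1 (by omega)
      rwa [show 1 + (Y-1) = Y by omega] at this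
    have hD := hstop Y le_rfl
    have hdX : g Y + 1 ≠ X := fun h => hD.2.2 ⟨h, rfl⟩
    have := H4 0 (g 0 + 1) (g Y + 1) hu (hstop 0 (by omega)).1 hD.1 (by omega) hdX (by omega)
    omega
  case pos =>
    obtain ⟨yp, hypY, hrXyp⟩ := hP
    have hypY' : yp < Y := lt_of_le_of_ne hypY (fun h => hfail (h ▸ hrXyp))
    -- climbing along column X
    have climb : ∀ b y, Rch X Y Pt X y → y ≤ b → b ≤ Y →
        (∀ b', y < b' → b' ≤ b → ¬ Obs X Y Pt X b') → Rch X Y Pt X b := by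
      intro b
      induction b with
      | zero =>
        intro y hr hyb _ _
        obtain rfl : y = 0 := by omega
        exact hr
      | succ n ih =>
        intro y hr hyb hbY hno
        rcases Nat.lt_or_ge y (n+1) with h | h
        · have hrn : Rch X Y Pt X n := ih y hr (by omega) (by omega)
            (fun b' h1 h2 => hno b' h1 (by omega))
          exact hrn.up hbY (hno (n+1) h le_rfl)
        · obtain rfl : y = n+1 := by omega
          exact hr
    have hobX : ∃ b, yp < b ∧ b ≤ Y ∧ Obs X Y Pt X b := by
      by_contra h; push_neg at h
      exact hfail (climb Y yp hrXyp hypY le_rfl (fun b' h1 h2 => h b' h1 h2))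
    have hβ0 : yp < Nat.find hobX ∧ Nat.find hobX ≤ Y ∧ Obs X Y Pt X (Nat.find hobX) :=
      Nat.find_spec hobX
    set β := Nat.find hobX with hβdef
    have hβY : β < Y := lt_of_le_of_ne hβ0.2.1 (fun h => hβ0.2.2.2.2 ⟨rfl, h⟩)
    have hrβ1 : Rch X Y Pt X (β - 1) := by
      apply climb (β-1) yp hrXyp (by omega) (by omega)
      intro b' h1 h2 ho
      exact Nat.find_min hobX (show b' < β by omega) ⟨h1, by omega, ho⟩
    have hnXhigh : ∀ y, β ≤ y → y ≤ Y → ¬ Rch X Y Pt X y := by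
      intro y h1 h2 hr
      rcases eq_or_lt_of_le h1 with h | h
      · exact hr.not_obs (h ▸ hβ0.2.2)
      · apply hfail
        apply climb Y y hr h2 le_rfl
        intro b' hb1 hb2 hob'
        have h3 := H3c X β b' Y hβ0.2.2.1 hob'.1 hv
        have hbY' : b' ≠ Y := fun hh => hob'.2.2 ⟨rfl, hh⟩
        omega
    have hglt : ∀ y, β ≤ y → y ≤ Y → g y < X :=
      fun y h1 h2 => lt_of_le_of_ne (hg_le y) (fun h => hnXhigh y h1 h2 (h ▸ hgr y h2))
    have hstop : ∀ y, β ≤ y → y ≤ Y → Obs X Y Pt (g y + 1) y := fun y h1 h2 =>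
      stop_right (hgr y h2) (by have := hglt y h1 h2; omega)
        (hg_max y (g y + 1) (by omega) (by have := hglt y h1 h2; omega))
    have hmono : ∀ y, β ≤ y → y + 1 ≤ Y → g y ≤ g (y+1) := by
      intro y h1 hy
      have hs : Rch X Y Pt (g y) (y+1) :=
        survive (hgr y (by omega)) (by have := hglt y h1 (by omega); omega) hy
          (hg_max y (g y + 1) (by omega) (by have := hglt y h1 (by omega); omega))
      exact hg_ge (y+1) (g y) (hg_le y) hs
    have hchain : ∀ y, β ≤ y → y ≤ Y → g y ≤ g Y := by
      have aux : ∀ k y, β ≤ y → y + k ≤ Y → g y ≤ g (y + k) := by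
        intro k
        induction k with
        | zero => intro y _ _; simp
        | succ n ih =>
          intro y h1 h
          calc g y ≤ g (y + n) := ih y h1 (by omega)
          _ ≤ g (y + n + 1) := hmono (y+n) (by omega) (by omega)
          _ = g (y + (n+1)) := by ring_nf
      intro y h1 h2
      have := aux (Y - y) y h1 (by omega)
      rwa [show y + (Y-y) = Y by omega] at this
    have hD : Obs X Y Pt (g Y + 1) Y := hstop Y (by omega) le_rfl
    have hδX : g Y + 1 ≠ X := fun h => hD.2.2 ⟨h, rfl⟩
    have hδle : g Y + 1 ≤ X := by have := hglt Y (by omega) le_rfl; omega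
    -- P3 : row 0 is clean inside the rectangle
    have hrow0 : ∀ a, a ≤ X → ¬ Obs X Y Pt a 0 := by
      intro a haX hA
      have ha0 : a ≠ 0 := fun h => hA.2.1 ⟨h, rfl⟩
      rcases eq_or_lt_of_le haX with haeq | halt
      · have h3 := H3c X 0 β Y (haeq ▸ hA.1) hβ0.2.2.1 hv
        omega
      · have hda : g Y + 1 ≤ a := H4 0 a (g Y + 1) hu hA.1 hD.1 ha0 hδX (by omega)
        obtain ⟨y0, hy0p, hry0⟩ := cross hrXyp a (le_of_lt halt)
        have hexk : ∃ y', y' ≤ Y ∧ Rch X Y Pt a y' := ⟨y0, le_trans hy0p hypY, hry0⟩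
        have hkk : ∀ m, Nat.findGreatest (fun y' => Rch X Y Pt a y') Y < m → m ≤ Y →
            ¬ Rch X Y Pt a m :=
          fun m h1 h2 => Nat.findGreatest_is_greatest (P := fun y' => Rch X Y Pt a y') h1 h2
        set k := Nat.findGreatest (fun y' => Rch X Y Pt a y') Y with hkdef
        have hrk : Rch X Y Pt a k :=
          Nat.findGreatest_spec (P := fun y' => Rch X Y Pt a y') hexk.choose_spec.1
            hexk.choose_spec.2
        have hkle : k ≤ Y := Nat.findGreatest_le _
        have hkY : k ≠ Y := by
          intro h
          have : a ≤ g Y := hg_ge Y a (by omega) (h ▸ hrk)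
          omega
        have hT : Obs X Y Pt a (k+1) := stop_up hrk (by omega) (hkk (k+1) (by omega) (by omega))
        have hβk : β ≤ k + 1 :=
          H5 a (k+1) β hA.1 hT.1 hβ0.2.2.1 (by omega) (by omega) (by omega)
        have hkβ : k + 1 ≤ β := by
          by_contra hc
          push_neg at hc
          have h1 : a ≤ g k := hg_ge k a (by omega) hrk
          have h2 := hchain k (by omega) (by omega)
          omega
        have hkeq : k + 1 = β := le_antisymm hkβ hβk
        have h1 : Rch X Y Pt (a+1) k := by
          apply hrk.right (by omega)
          intro hob
          have := dist2 hob hT (by omega)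
          rw [dd, dd] at this; omega
        have h2 : Rch X Y Pt (a+1) (k+1) := by
          apply h1.up (by omega)
          intro hob
          have := dist2 hob hT (by omega)
          rw [dd, dd] at this; omega
        have h3 : a + 1 ≤ g (k+1) := hg_ge (k+1) (a+1) (by omega) h2
        have h4 := hchain (k+1) (by omega) (by omega)
        omega
    -- P4 : column 0 is clean inside the rectangle
    have hcol0 : ∀ c, c ≤ Y → ¬ Obs X Y Pt 0 c := by
      intro c hcY hC
      have hc0 : c ≠ 0 := fun h => hC.2.1 ⟨rfl, h⟩
      rcases eq_or_lt_of_le hcY with hceq | hclt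
      · have h3 := H3r 0 (g Y + 1) X Y (hceq ▸ hC.1) hD.1 hv
        omega
      · have hβc : β ≤ c := H5 0 c β hu hC.1 hβ0.2.2.1 hc0 (by omega) (by omega)
        have hgc := hstop c hβc (by omega)
        have hδgc : g Y + 1 ≤ g c + 1 :=
          H4 c (g c + 1) (g Y + 1) hC.1 hgc.1 hD.1 (by omega) hδX (by omega)
        have hgcY := hchain c hβc (by omega)
        have hgceq : g c = g Y := by omega
        have hs' := hstop (c+1) (by omega) (by omega)
        have hm := hmono c hβc (by omega)
        have hc1 := hchain (c+1) (by omega) (by omega)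
        have hgc1 : g (c+1) = g Y := by omega
        rw [hgceq] at hgc
        rw [hgc1] at hs'
        have := dist2 hgc hs' (by omega)
        rw [dd, dd] at this; omega
    -- backward sweep
    have ND' : ∀ y, (∃ x, Rch' X Y Pt x (y+1)) → y + 1 ≤ Y → ∃ x, Rch' X Y Pt x y := by
      intro y hex hy
      have hrm : Rch' X Y Pt (Nat.find hex) (y+1) := Nat.find_spec hex
      set m := Nat.find hex with hmdef
      by_cases hob : Obs X Y Pt m y
      · exfalso
        rcases Nat.eq_zero_or_pos m with h0 | hpos
        · exact (hcol0 y (by omega)) (h0 ▸ hob)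
        · obtain ⟨m', hm'⟩ := Nat.exists_eq_succ_of_ne_zero (by omega : m ≠ 0)
          have hnm' : ¬ Rch' X Y Pt m' (y+1) := Nat.find_min hex (by omega)
          have hoL : Obs X Y Pt m' (y+1) := by
            by_contra ho
            exact hnm' ((hm' ▸ hrm).left ho)
          have := dist2 hoL hob (by omega)
          rw [dd, dd] at this; omega
      · exact ⟨m, hrm.down hob⟩
    have NE' : ∀ k, k ≤ Y → ∃ x, Rch' X Y Pt x (Y - k) := by
      intro k
      induction k with
      | zero => intro _; rw [Nat.sub_zero]; exact ⟨X, Rch'.base⟩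
      | succ n ih =>
        intro h
        have h1 := ih (by omega)
        rw [show Y - n = (Y - (n+1)) + 1 by omega] at h1
        exact ND' (Y - (n+1)) h1 (by omega)
    obtain ⟨x₀, hx₀⟩ := NE' Y le_rfl
    rw [Nat.sub_self] at hx₀
    have slide : ∀ x, Rch' X Y Pt x 0 → Rch' X Y Pt 0 0 := by
      intro x
      induction x with
      | zero => exact id
      | succ n ih =>
        intro h
        exact ih (h.left (hrow0 n (by have := h.bounds; omega)))
    have h00 : Rch' X Y Pt 0 0 := slide x₀ hx₀
    have connect : ∀ x y, Rch' X Y Pt x y → Rch X Y Pt x y → Rch X Y Pt X Y := by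
      intro x y h
      induction h with
      | base => exact id
      | @left x y h hob ih => intro hr; exact ih (hr.right h.bounds.1 h.not_obs)
      | @down x y h hob ih => intro hr; exact ih (hr.up h.bounds.2 h.not_obs)
    exact hfail (connect 0 0 h00 Rch.base)


open SimpleGraph

variable {s t : ℕ}

/-- An affine embedding of `{0,…,dist a b}` into `Fin n` going from `a` to `b`. -/
structure Emb (n : ℕ) (a b : Fin n) where
  f : ℕ → ℕ
  h0 : f 0 = a.val
  hL : f (Nat.dist a.val b.val) = b.val
  hlt : ∀ x, x ≤ Nat.dist a.val b.val → f x < n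
  hdist : ∀ x y, x ≤ Nat.dist a.val b.val → y ≤ Nat.dist a.val b.val →
    Nat.dist (f x) (f y) = Nat.dist x y
  hmono : (∀ x y, x ≤ y → y ≤ Nat.dist a.val b.val → f x ≤ f y) ∨
          (∀ x y, x ≤ y → y ≤ Nat.dist a.val b.val → f y ≤ f x)

def embOf {n : ℕ} (a b : Fin n) : Emb n a b := by
  by_cases h : a.val ≤ b.val
  · exact
      { f := fun x => a.val + x
        h0 := by simp
        hL := by show a.val + Nat.dist a.val b.val = b.val; simp only [Nat.dist]; omega
        hlt := fun x hx => by
          have := b.isLt; simp only [Nat.dist] at hx; show a.val + x < n; omega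
        hdist := fun x y _ _ => by
          show Nat.dist (a.val + x) (a.val + y) = Nat.dist x y; simp only [Nat.dist]; omega
        hmono := Or.inl (fun x y hxy _ => by show a.val + x ≤ a.val + y; omega) }
  · exact
      { f := fun x => a.val - x
        h0 := by simp
        hL := by show a.val - Nat.dist a.val b.val = b.val; simp only [Nat.dist]; omega
        hlt := fun x hx => by have := a.isLt; show a.val - x < n; omega
        hdist := fun x y hx hy => by
          show Nat.dist (a.val - x) (a.val - y) = Nat.dist x y
          simp only [Nat.dist] at *; omega
        hmono := Or.inr (fun x y hxy hy => by
          show a.val - y ≤ a.val - x; simp only [Nat.dist] at *; omega) }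

def Emb.vx {n : ℕ} {a b : Fin n} (e : Emb n a b) (x : ℕ) : Fin n :=
  ⟨e.f x % n, Nat.mod_lt _ a.pos⟩

theorem Emb.vx_val {n : ℕ} {a b : Fin n} (e : Emb n a b) {x : ℕ}
    (hx : x ≤ Nat.dist a.val b.val) : (e.vx x).val = e.f x :=
  Nat.mod_eq_of_lt (e.hlt x hx)

theorem Emb.vx_zero {n : ℕ} {a b : Fin n} (e : Emb n a b) : e.vx 0 = a :=
  Fin.ext (by rw [e.vx_val (Nat.zero_le _), e.h0])

theorem Emb.vx_last {n : ℕ} {a b : Fin n} (e : Emb n a b) :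
    e.vx (Nat.dist a.val b.val) = b :=
  Fin.ext (by rw [e.vx_val le_rfl, e.hL])

theorem Emb.vx_dist {n : ℕ} {a b : Fin n} (e : Emb n a b) {x y : ℕ}
    (hx : x ≤ Nat.dist a.val b.val) (hy : y ≤ Nat.dist a.val b.val) :
    Nat.dist (e.vx x).val (e.vx y).val = Nat.dist x y := by
  rw [e.vx_val hx, e.vx_val hy]; exact e.hdist x y hx hy

theorem Emb.vx_inj {n : ℕ} {a b : Fin n} (e : Emb n a b) {x y : ℕ}
    (hx : x ≤ Nat.dist a.val b.val) (hy : y ≤ Nat.dist a.val b.val)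
    (h : e.vx x = e.vx y) : x = y := by
  have hd := e.vx_dist hx hy
  rw [h, Nat.dist_self] at hd
  exact Nat.eq_of_dist_eq_zero hd.symm

theorem Emb.adj_vx {n : ℕ} {a b : Fin n} (e : Emb n a b) {x : ℕ}
    (hx : x + 1 ≤ Nat.dist a.val b.val) :
    (pathGraph n).Adj (e.vx x) (e.vx (x+1)) := by
  rw [pathGraph_adj]
  have := e.vx_dist (x := x) (y := x+1) (by omega) hx
  simp only [Nat.dist] at this
  omega

theorem walk_lower {p q : Fin s × Fin t} (w : (pathGraph s □ pathGraph t).Walk p q) :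
    Nat.dist p.1.val q.1.val + Nat.dist p.2.val q.2.val ≤ w.length := by
  induction w with
  | nil => simp [Nat.dist_self]
  | @cons a b c h w ih =>
    rw [SimpleGraph.Walk.length_cons]
    rw [SimpleGraph.boxProd_adj] at h
    have t1 := Nat.dist.triangle_inequality a.1.val b.1.val c.1.val
    have t2 := Nat.dist.triangle_inequality a.2.val b.2.val c.2.val
    rcases h with ⟨h1, h2⟩ | ⟨h1, h2⟩
    · rw [pathGraph_adj] at h1
      have e2 : a.2.val = b.2.val := congrArg Fin.val h2
      have : Nat.dist a.1.val b.1.val = 1 := by simp only [Nat.dist]; omega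
      have e2' : Nat.dist a.2.val b.2.val = 0 := by rw [e2]; exact Nat.dist_self _
      omega
    · rw [pathGraph_adj] at h1
      have e2 : a.1.val = b.1.val := congrArg Fin.val h2
      have : Nat.dist a.2.val b.2.val = 1 := by simp only [Nat.dist]; omega
      have e2' : Nat.dist a.1.val b.1.val = 0 := by rw [e2]; exact Nat.dist_self _
      omega

/-- Horizontal segment walk. -/
theorem segH {a b : Fin s} (e : Emb s a b) (c : Fin t) :
    ∀ k, k ≤ Nat.dist a.val b.val →
      ∃ w : (pathGraph s □ pathGraph t).Walk (a, c) (e.vx k, c),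
        w.length = k ∧ w.IsPath ∧
        ∀ p ∈ w.support, p.2 = c ∧ ∃ j, j ≤ k ∧ p.1 = e.vx j := by
  intro k
  induction k with
  | zero =>
    intro _
    refine ⟨(SimpleGraph.Walk.nil).copy rfl (by rw [e.vx_zero]), by simp, by simp, ?_⟩
    intro p hp
    rw [SimpleGraph.Walk.support_copy, SimpleGraph.Walk.support_nil] at hp
    simp at hp
    subst hp
    exact ⟨rfl, 0, le_rfl, by rw [e.vx_zero]⟩
  | succ n ih =>
    intro h
    obtain ⟨w, hlen, hpath, hsupp⟩ := ih (by omega)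
    have hadj : (pathGraph s □ pathGraph t).Adj (e.vx n, c) (e.vx (n+1), c) := by
      rw [SimpleGraph.boxProd_adj]
      exact Or.inl ⟨e.adj_vx h, rfl⟩
    have hnotmem : (e.vx (n+1), c) ∉ w.support := by
      intro hmem
      obtain ⟨-, j, hj, hpj⟩ := hsupp _ hmem
      have : n + 1 = j := e.vx_inj h (by omega) hpj
      omega
    refine ⟨w.concat hadj, ?_, ?_, ?_⟩
    · rw [SimpleGraph.Walk.length_concat, hlen]; try omega
    · rw [SimpleGraph.Walk.isPath_def, SimpleGraph.Walk.support_concat,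
        List.nodup_append]
      exact ⟨hpath.support_nodup, List.nodup_singleton _,
        fun p hp b hb hpb => by simp at hb; subst hb; subst hpb; exact hnotmem hp⟩
    · intro p hp
      rw [SimpleGraph.Walk.support_concat, List.mem_append] at hp
      rcases hp with hp | hp
      · obtain ⟨h1, j, hj, hpj⟩ := hsupp _ hp
        exact ⟨h1, j, by omega, hpj⟩
      · simp at hp
        subst hp
        exact ⟨rfl, n+1, le_rfl, rfl⟩

/-- Vertical segment walk. -/
theorem segV {c d : Fin t} (e : Emb t c d) (a : Fin s) :
    ∀ k, k ≤ Nat.dist c.val d.val →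
      ∃ w : (pathGraph s □ pathGraph t).Walk (a, c) (a, e.vx k),
        w.length = k ∧ w.IsPath ∧
        ∀ p ∈ w.support, p.1 = a ∧ ∃ j, j ≤ k ∧ p.2 = e.vx j := by
  intro k
  induction k with
  | zero =>
    intro _
    refine ⟨(SimpleGraph.Walk.nil).copy rfl (by rw [e.vx_zero]), by simp, by simp, ?_⟩
    intro p hp
    rw [SimpleGraph.Walk.support_copy, SimpleGraph.Walk.support_nil] at hp
    simp at hp
    subst hp
    exact ⟨rfl, 0, le_rfl, by rw [e.vx_zero]⟩
  | succ n ih =>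
    intro h
    obtain ⟨w, hlen, hpath, hsupp⟩ := ih (by omega)
    have hadj : (pathGraph s □ pathGraph t).Adj (a, e.vx n) (a, e.vx (n+1)) := by
      rw [SimpleGraph.boxProd_adj]
      exact Or.inr ⟨e.adj_vx h, rfl⟩
    have hnotmem : (a, e.vx (n+1)) ∉ w.support := by
      intro hmem
      obtain ⟨-, j, hj, hpj⟩ := hsupp _ hmem
      have : n + 1 = j := e.vx_inj h (by omega) hpj
      omega
    refine ⟨w.concat hadj, ?_, ?_, ?_⟩
    · rw [SimpleGraph.Walk.length_concat, hlen]; try omega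
    · rw [SimpleGraph.Walk.isPath_def, SimpleGraph.Walk.support_concat,
        List.nodup_append]
      exact ⟨hpath.support_nodup, List.nodup_singleton _,
        fun p hp b hb hpb => by simp at hb; subst hb; subst hpb; exact hnotmem hp⟩
    · intro p hp
      rw [SimpleGraph.Walk.support_concat, List.mem_append] at hp
      rcases hp with hp | hp
      · obtain ⟨h1, j, hj, hpj⟩ := hsupp _ hp
        exact ⟨h1, j, by omega, hpj⟩
      · simp at hp
        subst hp
        exact ⟨rfl, n+1, le_rfl, rfl⟩

theorem grid_dist (p q : Fin s × Fin t) :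
    (pathGraph s □ pathGraph t).dist p q = Nat.dist p.1.val q.1.val + Nat.dist p.2.val q.2.val := by
  obtain ⟨w1, hl1, -, -⟩ := segH (embOf p.1 q.1) p.2 (Nat.dist p.1.val q.1.val) le_rfl
  obtain ⟨w2, hl2, -, -⟩ := segV (embOf p.2 q.2) q.1 (Nat.dist p.2.val q.2.val) le_rfl
  have e1 : ((embOf p.1 q.1).vx (Nat.dist p.1.val q.1.val), p.2) = (q.1, p.2) := by
    rw [(embOf p.1 q.1).vx_last]
  have e2 : (q.1, (embOf p.2 q.2).vx (Nat.dist p.2.val q.2.val)) = q := by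
    rw [(embOf p.2 q.2).vx_last]
  apply le_antisymm
  · have hd := SimpleGraph.dist_le ((w1.copy rfl e1).append (w2.copy rfl e2))
    rwa [SimpleGraph.Walk.length_append, SimpleGraph.Walk.length_copy,
      SimpleGraph.Walk.length_copy, hl1, hl2] at hd
  · obtain ⟨w0, hw0⟩ := SimpleGraph.Reachable.exists_walk_length_eq_dist
      ⟨(w1.copy rfl e1).append (w2.copy rfl e2)⟩
    rw [← hw0]
    exact walk_lower w0


/-- Build a shortest path from a reachability certificate. -/
theorem walk_of_rch {s t : ℕ} {u v : Fin s × Fin t} (M : Set (Fin s × Fin t))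
    (ex : Emb s u.1 v.1) (ey : Emb t u.2 v.2) {x y : ℕ}
    (h : Rch (Nat.dist u.1.val v.1.val) (Nat.dist u.2.val v.2.val)
      (fun x y => x ≤ Nat.dist u.1.val v.1.val ∧ y ≤ Nat.dist u.2.val v.2.val ∧
        (ex.vx x, ey.vx y) ∈ M) x y) :
    ∃ w : (pathGraph s □ pathGraph t).Walk u (ex.vx x, ey.vx y),
      w.length = x + y ∧ w.IsPath ∧
      (∀ p ∈ w.support, p ∈ M → p = u ∨ p = v) ∧
      (∀ p ∈ w.support, ∃ x' y', x' ≤ x ∧ y' ≤ y ∧ p = (ex.vx x', ey.vx y')) := by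
  set X := Nat.dist u.1.val v.1.val with hX
  set Y := Nat.dist u.2.val v.2.val with hY
  set Pt : ℕ → ℕ → Prop := fun x y => x ≤ X ∧ y ≤ Y ∧ (ex.vx x, ey.vx y) ∈ M with hPt
  have hu0 : (ex.vx 0, ey.vx 0) = u := by rw [ex.vx_zero, ey.vx_zero]
  have hvL : (ex.vx X, ey.vx Y) = v := by rw [ex.vx_last, ey.vx_last]
  induction h with
  | base =>
    refine ⟨(SimpleGraph.Walk.nil).copy rfl hu0.symm, by simp, by simp, ?_, ?_⟩
    · intro p hp
      rw [SimpleGraph.Walk.support_copy, SimpleGraph.Walk.support_nil] at hp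
      simp at hp
      subst hp
      exact fun _ => Or.inl rfl
    · intro p hp
      rw [SimpleGraph.Walk.support_copy, SimpleGraph.Walk.support_nil] at hp
      simp at hp
      subst hp
      exact ⟨0, 0, le_rfl, le_rfl, hu0.symm⟩
  | @right x y hr hx hobs ih =>
    obtain ⟨w, hlen, hpath, havoid, hsupp⟩ := ih
    have hyY : y ≤ Y := hr.bounds.2
    have hxX : x ≤ X := hr.bounds.1
    have hadj : (pathGraph s □ pathGraph t).Adj (ex.vx x, ey.vx y) (ex.vx (x+1), ey.vx y) := by
      rw [SimpleGraph.boxProd_adj]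
      exact Or.inl ⟨ex.adj_vx hx, rfl⟩
    have hfresh : (ex.vx (x+1), ey.vx y) ∉ w.support := by
      intro hmem
      obtain ⟨x', y', hx', hy', hpe⟩ := hsupp _ hmem
      have h1 : ex.vx (x+1) = ex.vx x' := congrArg Prod.fst hpe
      have := ex.vx_inj hx (by omega) h1
      omega
    refine ⟨w.concat hadj, ?_, ?_, ?_, ?_⟩
    · rw [SimpleGraph.Walk.length_concat, hlen]; try omega
    · rw [SimpleGraph.Walk.isPath_def, SimpleGraph.Walk.support_concat,
        List.nodup_append]
      exact ⟨hpath.support_nodup, List.nodup_singleton _,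
        fun p hp b hb hpb => by simp at hb; subst hb; subst hpb; exact hfresh hp⟩
    · intro p hp hpM
      rw [SimpleGraph.Walk.support_concat, List.mem_append] at hp
      rcases hp with hp | hp
      · exact havoid _ hp hpM
      · simp at hp
        subst hp
        right
        have hPtnew : Pt (x+1) y := ⟨hx, hyY, hpM⟩
        have : (x+1 = 0 ∧ y = 0) ∨ (x+1 = X ∧ y = Y) := by
          by_contra hc
          push_neg at hc
          exact hobs ⟨hPtnew, fun hh => by omega, fun hh => hc.2 hh.1 hh.2⟩
        rcases this with ⟨h1, -⟩ | ⟨h1, h2⟩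
        · omega
        · rw [h1, h2]; exact hvL
    · intro p hp
      rw [SimpleGraph.Walk.support_concat, List.mem_append] at hp
      rcases hp with hp | hp
      · obtain ⟨x', y', h1, h2, h3⟩ := hsupp _ hp
        exact ⟨x', y', by omega, h2, h3⟩
      · simp at hp
        subst hp
        exact ⟨x+1, y, le_rfl, le_rfl, rfl⟩
  | @up x y hr hy hobs ih =>
    obtain ⟨w, hlen, hpath, havoid, hsupp⟩ := ih
    have hyY : y ≤ Y := hr.bounds.2
    have hxX : x ≤ X := hr.bounds.1
    have hadj : (pathGraph s □ pathGraph t).Adj (ex.vx x, ey.vx y) (ex.vx x, ey.vx (y+1)) := by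
      rw [SimpleGraph.boxProd_adj]
      exact Or.inr ⟨ey.adj_vx hy, rfl⟩
    have hfresh : (ex.vx x, ey.vx (y+1)) ∉ w.support := by
      intro hmem
      obtain ⟨x', y', hx', hy', hpe⟩ := hsupp _ hmem
      have h1 : ey.vx (y+1) = ey.vx y' := congrArg Prod.snd hpe
      have := ey.vx_inj hy (by omega) h1
      omega
    refine ⟨w.concat hadj, ?_, ?_, ?_, ?_⟩
    · rw [SimpleGraph.Walk.length_concat, hlen]; try omega
    · rw [SimpleGraph.Walk.isPath_def, SimpleGraph.Walk.support_concat,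
        List.nodup_append]
      exact ⟨hpath.support_nodup, List.nodup_singleton _,
        fun p hp b hb hpb => by simp at hb; subst hb; subst hpb; exact hfresh hp⟩
    · intro p hp hpM
      rw [SimpleGraph.Walk.support_concat, List.mem_append] at hp
      rcases hp with hp | hp
      · exact havoid _ hp hpM
      · simp at hp
        subst hp
        right
        have hPtnew : Pt x (y+1) := ⟨hxX, hy, hpM⟩
        have : (x = 0 ∧ y+1 = 0) ∨ (x = X ∧ y+1 = Y) := by
          by_contra hc
          push_neg at hc
          exact hobs ⟨hPtnew, fun hh => by omega, fun hh => hc.2 hh.1 hh.2⟩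
        rcases this with ⟨-, h1⟩ | ⟨h1, h2⟩
        · omega
        · rw [h1, h2]; exact hvL
    · intro p hp
      rw [SimpleGraph.Walk.support_concat, List.mem_append] at hp
      rcases hp with hp | hp
      · obtain ⟨x', y', h1, h2, h3⟩ := hsupp _ hp
        exact ⟨x', y', h1, by omega, h3⟩
      · simp at hp
        subst hp
        exact ⟨x, y+1, le_rfl, le_rfl, rfl⟩




open SimpleGraph

theorem main_theorem (s t : ℕ) (hs : 2 ≤ s) (ht : 2 ≤ t)
    (M : Set (Fin s × Fin t))
    (h1 : ∀ i : Fin t, (M ∩ {p : Fin s × Fin t | p.2 = i}).ncard ≤ 2)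
    (h1' : ∀ j : Fin s, (M ∩ {p : Fin s × Fin t | p.1 = j}).ncard ≤ 2)
    (h2 : ∀ (i j : Fin t) (u v w z : Fin s × Fin t),
      M ∩ {p : Fin s × Fin t | p.2 = i} = {u, v} →
      M ∩ {p : Fin s × Fin t | p.2 = j} = {w, z} →
      (Set.uIcc u.1 v.1 ∩ Set.uIcc w.1 z.1).Nonempty)
    (h3 : ∀ (i j : Fin s) (u v w z : Fin s × Fin t),
      M ∩ {p : Fin s × Fin t | p.1 = i} = {u, v} →
      M ∩ {p : Fin s × Fin t | p.1 = j} = {w, z} →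
      (Set.uIcc u.2 v.2 ∩ Set.uIcc w.2 z.2).Nonempty)
    (h4 : ∀ u ∈ M, ∀ v ∈ M, u ≠ v → 3 ≤ (pathGraph s □ pathGraph t).dist u v) :
    IsMutualVisibilitySet (pathGraph s □ pathGraph t) M := by
  classical
  intro u hu v hv
  by_cases huv : u = v
  · subst huv
    refine ⟨SimpleGraph.Walk.nil, SimpleGraph.Walk.IsPath.nil,
      by simp [SimpleGraph.dist_self], ?_⟩
    intro w hw _
    rw [SimpleGraph.Walk.support_nil] at hw
    simp at hw
    exact Or.inl hw
  by_cases hX0 : Nat.dist u.1.val v.1.val = 0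
  · -- u and v in the same column
    have he1 : u.1 = v.1 := Fin.ext (Nat.eq_of_dist_eq_zero hX0)
    obtain ⟨w, hlen, hpath, hsupp⟩ := segV (embOf u.2 v.2) u.1 _ le_rfl
    have hend : ((u.1 : Fin s), (embOf u.2 v.2).vx (Nat.dist u.2.val v.2.val)) = v := by
      rw [(embOf u.2 v.2).vx_last, he1]
    refine ⟨w.copy rfl hend, ?_, ?_, ?_⟩
    · rwa [SimpleGraph.Walk.isPath_copy]
    · rw [SimpleGraph.Walk.length_copy, hlen, grid_dist, hX0, Nat.zero_add]
    · intro p hp hpM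
      rw [SimpleGraph.Walk.support_copy] at hp
      obtain ⟨hp1, -⟩ := hsupp p hp
      have hfib : M ∩ {q : Fin s × Fin t | q.1 = u.1} = {u, v} :=
        eq_pair_of_ncard_le (h1' u.1) ⟨hu, rfl⟩ ⟨hv, he1.symm⟩ huv
      have hpm : p ∈ M ∩ {q : Fin s × Fin t | q.1 = u.1} := ⟨hpM, hp1⟩
      rw [hfib] at hpm
      simpa using hpm
  by_cases hY0 : Nat.dist u.2.val v.2.val = 0
  · -- u and v in the same row
    have he2 : u.2 = v.2 := Fin.ext (Nat.eq_of_dist_eq_zero hY0)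
    obtain ⟨w, hlen, hpath, hsupp⟩ := segH (embOf u.1 v.1) u.2 _ le_rfl
    have hend : ((embOf u.1 v.1).vx (Nat.dist u.1.val v.1.val), (u.2 : Fin t)) = v := by
      rw [(embOf u.1 v.1).vx_last, he2]
    refine ⟨w.copy rfl hend, ?_, ?_, ?_⟩
    · rwa [SimpleGraph.Walk.isPath_copy]
    · rw [SimpleGraph.Walk.length_copy, hlen, grid_dist, hY0, Nat.add_zero]
    · intro p hp hpM
      rw [SimpleGraph.Walk.support_copy] at hp
      obtain ⟨hp1, -⟩ := hsupp p hp
      have hfib : M ∩ {q : Fin s × Fin t | q.2 = u.2} = {u, v} :=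
        eq_pair_of_ncard_le (h1 u.2) ⟨hu, rfl⟩ ⟨hv, he2.symm⟩ huv
      have hpm : p ∈ M ∩ {q : Fin s × Fin t | q.2 = u.2} := ⟨hpM, hp1⟩
      rw [hfib] at hpm
      simpa using hpm
  -- main case
  set X := Nat.dist u.1.val v.1.val with hXdef
  set Y := Nat.dist u.2.val v.2.val with hYdef
  set ex : Emb s u.1 v.1 := embOf u.1 v.1 with hexdef
  set ey : Emb t u.2 v.2 := embOf u.2 v.2 with heydef
  set Pt : ℕ → ℕ → Prop :=
    fun x y => x ≤ X ∧ y ≤ Y ∧ (ex.vx x, ey.vx y) ∈ M with hPtdef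
  have hX1 : 1 ≤ X := by omega
  have hY1 : 1 ≤ Y := by omega
  have hu0pair : ((ex.vx 0 : Fin s), (ey.vx 0 : Fin t)) = u := by rw [ex.vx_zero, ey.vx_zero]
  have hvLpair : ((ex.vx X : Fin s), (ey.vx Y : Fin t)) = v := by rw [ex.vx_last, ey.vx_last]
  have hPt00 : Pt 0 0 := ⟨Nat.zero_le _, Nat.zero_le _, by rw [hu0pair]; exact hu⟩
  have hPtXY : Pt X Y := ⟨le_rfl, le_rfl, by rw [hvLpair]; exact hv⟩
  have H2' : ∀ x y x' y', Pt x y → Pt x' y' → ¬(x = x' ∧ y = y') →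
      3 ≤ Nat.dist x x' + Nat.dist y y' := by
    intro x y x' y' hp hp' hne
    have hne2 : ((ex.vx x, ey.vx y) : Fin s × Fin t) ≠ (ex.vx x', ey.vx y') := by
      intro he
      exact hne ⟨ex.vx_inj hp.1 hp'.1 (congrArg Prod.fst he),
        ey.vx_inj hp.2.1 hp'.2.1 (congrArg Prod.snd he)⟩
    have hdd := h4 _ hp.2.2 _ hp'.2.2 hne2
    rw [grid_dist] at hdd
    have hdd2 : 3 ≤ Nat.dist (ex.vx x).val (ex.vx x').val
        + Nat.dist (ey.vx y).val (ey.vx y').val := hdd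
    rwa [ex.vx_dist hp.1 hp'.1, ey.vx_dist hp.2.1 hp'.2.1] at hdd2
  have H3r' : ∀ x1 x2 x3 y, Pt x1 y → Pt x2 y → Pt x3 y → x1 = x2 ∨ x1 = x3 ∨ x2 = x3 := by
    intro x1 x2 x3 y hp1 hp2 hp3
    by_contra hc
    push_neg at hc
    obtain ⟨h12, h13, h23⟩ := hc
    have hne : ∀ {a b : ℕ}, a ≤ X → b ≤ X → a ≠ b →
        ((ex.vx a, ey.vx y) : Fin s × Fin t) ≠ (ex.vx b, ey.vx y) :=
      fun ha hb hab he => hab (ex.vx_inj ha hb (congrArg Prod.fst he))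
    have hcard := three_le_ncard (S := M ∩ {p : Fin s × Fin t | p.2 = ey.vx y})
      ⟨hp1.2.2, rfl⟩ ⟨hp2.2.2, rfl⟩ ⟨hp3.2.2, rfl⟩
      (hne hp1.1 hp2.1 h12) (hne hp1.1 hp3.1 h13) (hne hp2.1 hp3.1 h23)
    have := h1 (ey.vx y)
    omega
  have H3c' : ∀ x y1 y2 y3, Pt x y1 → Pt x y2 → Pt x y3 → y1 = y2 ∨ y1 = y3 ∨ y2 = y3 := by
    intro x y1 y2 y3 hp1 hp2 hp3
    by_contra hc
    push_neg at hc
    obtain ⟨h12, h13, h23⟩ := hc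
    have hne : ∀ {a b : ℕ}, a ≤ Y → b ≤ Y → a ≠ b →
        ((ex.vx x, ey.vx a) : Fin s × Fin t) ≠ (ex.vx x, ey.vx b) :=
      fun ha hb hab he => hab (ey.vx_inj ha hb (congrArg Prod.snd he))
    have hcard := three_le_ncard (S := M ∩ {p : Fin s × Fin t | p.1 = ex.vx x})
      ⟨hp1.2.2, rfl⟩ ⟨hp2.2.2, rfl⟩ ⟨hp3.2.2, rfl⟩
      (hne hp1.2.1 hp2.2.1 h12) (hne hp1.2.1 hp3.2.1 h13) (hne hp2.2.1 hp3.2.1 h23)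
    have := h1' (ex.vx x)
    omega
  have H4' : ∀ c w d, Pt 0 c → Pt w c → Pt d Y → w ≠ 0 → d ≠ X → c ≠ Y → d ≤ w := by
    intro c w d hp1 hp2 hp3 hw0 hdX hcY
    have hA12 : ((ex.vx 0, ey.vx c) : Fin s × Fin t) ≠ (ex.vx w, ey.vx c) :=
      fun he => hw0 ((ex.vx_inj (Nat.zero_le _) hp2.1 (congrArg Prod.fst he)).symm)
    have hset1 : M ∩ {p : Fin s × Fin t | p.2 = ey.vx c}
        = {(ex.vx 0, ey.vx c), (ex.vx w, ey.vx c)} :=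
      eq_pair_of_ncard_le (h1 (ey.vx c)) ⟨hp1.2.2, rfl⟩ ⟨hp2.2.2, rfl⟩ hA12
    have hBv : ((ex.vx d, ey.vx Y) : Fin s × Fin t) ≠ (ex.vx X, ey.vx Y) :=
      fun he => hdX (ex.vx_inj hp3.1 le_rfl (congrArg Prod.fst he))
    have hset2 : M ∩ {p : Fin s × Fin t | p.2 = ey.vx Y}
        = {(ex.vx d, ey.vx Y), (ex.vx X, ey.vx Y)} :=
      eq_pair_of_ncard_le (h1 (ey.vx Y)) ⟨hp3.2.2, rfl⟩
        ⟨by rw [hvLpair]; exact hv, rfl⟩ hBv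
    obtain ⟨m, hm1, hm2⟩ := h2 (ey.vx c) (ey.vx Y) _ _ _ _ hset1 hset2
    have hm1' : m ∈ Set.uIcc (ex.vx 0) (ex.vx w) := hm1
    have hm2' : m ∈ Set.uIcc (ex.vx d) (ex.vx X) := hm2
    rw [Set.mem_uIcc] at hm1' hm2'
    simp only [Fin.le_def] at hm1' hm2'
    have hdd := ex.vx_dist hp3.1 hp2.1
    rw [nat_dist_eq, nat_dist_eq] at hdd
    by_contra hdw
    push_neg at hdw
    rcases ex.hmono with hmon | hmon
    · have k1 : (ex.vx 0).val ≤ (ex.vx w).val := by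
        rw [ex.vx_val (Nat.zero_le _), ex.vx_val hp2.1]
        exact hmon 0 w (Nat.zero_le _) hp2.1
      have k2 : (ex.vx d).val ≤ (ex.vx X).val := by
        rw [ex.vx_val hp3.1, ex.vx_val le_rfl]
        exact hmon d X hp3.1 le_rfl
      have k3 : (ex.vx w).val ≤ (ex.vx d).val := by
        rw [ex.vx_val hp2.1, ex.vx_val hp3.1]
        exact hmon w d (by omega) hp3.1
      omega
    · have k1 : (ex.vx w).val ≤ (ex.vx 0).val := by
        rw [ex.vx_val (Nat.zero_le _), ex.vx_val hp2.1]
        exact hmon 0 w (Nat.zero_le _) hp2.1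
      have k2 : (ex.vx X).val ≤ (ex.vx d).val := by
        rw [ex.vx_val hp3.1, ex.vx_val le_rfl]
        exact hmon d X hp3.1 le_rfl
      have k3 : (ex.vx d).val ≤ (ex.vx w).val := by
        rw [ex.vx_val hp2.1, ex.vx_val hp3.1]
        exact hmon w d (by omega) hp3.1
      omega
  have H5' : ∀ a w b, Pt a 0 → Pt a w → Pt X b → w ≠ 0 → b ≠ Y → a ≠ X → b ≤ w := by
    intro a w b hp1 hp2 hp3 hw0 hbY haX
    have hA12 : ((ex.vx a, ey.vx 0) : Fin s × Fin t) ≠ (ex.vx a, ey.vx w) :=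
      fun he => hw0 ((ey.vx_inj (Nat.zero_le _) hp2.2.1 (congrArg Prod.snd he)).symm)
    have hset1 : M ∩ {p : Fin s × Fin t | p.1 = ex.vx a}
        = {(ex.vx a, ey.vx 0), (ex.vx a, ey.vx w)} :=
      eq_pair_of_ncard_le (h1' (ex.vx a)) ⟨hp1.2.2, rfl⟩ ⟨hp2.2.2, rfl⟩ hA12
    have hBv : ((ex.vx X, ey.vx b) : Fin s × Fin t) ≠ (ex.vx X, ey.vx Y) :=
      fun he => hbY (ey.vx_inj hp3.2.1 le_rfl (congrArg Prod.snd he))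
    have hset2 : M ∩ {p : Fin s × Fin t | p.1 = ex.vx X}
        = {(ex.vx X, ey.vx b), (ex.vx X, ey.vx Y)} :=
      eq_pair_of_ncard_le (h1' (ex.vx X)) ⟨hp3.2.2, rfl⟩
        ⟨by rw [hvLpair]; exact hv, rfl⟩ hBv
    obtain ⟨m, hm1, hm2⟩ := h3 (ex.vx a) (ex.vx X) _ _ _ _ hset1 hset2
    have hm1' : m ∈ Set.uIcc (ey.vx 0) (ey.vx w) := hm1
    have hm2' : m ∈ Set.uIcc (ey.vx b) (ey.vx Y) := hm2
    rw [Set.mem_uIcc] at hm1' hm2'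
    simp only [Fin.le_def] at hm1' hm2'
    have hdd := ey.vx_dist hp3.2.1 hp2.2.1
    rw [nat_dist_eq, nat_dist_eq] at hdd
    by_contra hbw
    push_neg at hbw
    rcases ey.hmono with hmon | hmon
    · have k1 : (ey.vx 0).val ≤ (ey.vx w).val := by
        rw [ey.vx_val (Nat.zero_le _), ey.vx_val hp2.2.1]
        exact hmon 0 w (Nat.zero_le _) hp2.2.1
      have k2 : (ey.vx b).val ≤ (ey.vx Y).val := by
        rw [ey.vx_val hp3.2.1, ey.vx_val le_rfl]
        exact hmon b Y hp3.2.1 le_rfl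
      have k3 : (ey.vx w).val ≤ (ey.vx b).val := by
        rw [ey.vx_val hp2.2.1, ey.vx_val hp3.2.1]
        exact hmon w b (by omega) hp3.2.1
      omega
    · have k1 : (ey.vx w).val ≤ (ey.vx 0).val := by
        rw [ey.vx_val (Nat.zero_le _), ey.vx_val hp2.2.1]
        exact hmon 0 w (Nat.zero_le _) hp2.2.1
      have k2 : (ey.vx Y).val ≤ (ey.vx b).val := by
        rw [ey.vx_val hp3.2.1, ey.vx_val le_rfl]
        exact hmon b Y hp3.2.1 le_rfl
      have k3 : (ey.vx b).val ≤ (ey.vx w).val := by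
        rw [ey.vx_val hp2.2.1, ey.vx_val hp3.2.1]
        exact hmon w b (by omega) hp3.2.1
      omega
  have hrch : Rch X Y Pt X Y := machine X Y Pt hX1 hY1 hPt00 hPtXY H2' H3r' H3c' H4' H5'
  obtain ⟨w, hlen, hpath, havoid, -⟩ := walk_of_rch M ex ey hrch
  refine ⟨w.copy rfl hvLpair, ?_, ?_, ?_⟩
  · rwa [SimpleGraph.Walk.isPath_copy]
  · rw [SimpleGraph.Walk.length_copy, hlen, grid_dist]
  · intro p hp hpM
    rw [SimpleGraph.Walk.support_copy] at hp
    exact havoid p hp hpM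

end MVGrid

theorem mutualVisibilitySet_of_conditions (s t : ℕ) (hs : 2 ≤ s) (ht : 2 ≤ t)
    (M : Set (Fin s × Fin t))
    (h1 : ∀ i : Fin t, (M ∩ {p : Fin s × Fin t | p.2 = i}).ncard ≤ 2)
    (h1' : ∀ j : Fin s, (M ∩ {p : Fin s × Fin t | p.1 = j}).ncard ≤ 2)
    (h2 : ∀ (i j : Fin t) (u v w z : Fin s × Fin t),
      M ∩ {p : Fin s × Fin t | p.2 = i} = {u, v} →
      M ∩ {p : Fin s × Fin t | p.2 = j} = {w, z} →
      (Set.uIcc u.1 v.1 ∩ Set.uIcc w.1 z.1).Nonempty)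
    (h3 : ∀ (i j : Fin s) (u v w z : Fin s × Fin t),
      M ∩ {p : Fin s × Fin t | p.1 = i} = {u, v} →
      M ∩ {p : Fin s × Fin t | p.1 = j} = {w, z} →
      (Set.uIcc u.2 v.2 ∩ Set.uIcc w.2 z.2).Nonempty)
    (h4 : ∀ u ∈ M, ∀ v ∈ M, u ≠ v → 3 ≤ (pathGraph s □ pathGraph t).dist u v) :
    IsMutualVisibilitySet (pathGraph s □ pathGraph t) M :=
  MVGrid.main_theorem s t hs ht M h1 h1' h2 h3 h4
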